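/- For every integer H ≥ 1 and every ε ∈ (0,1), there exists a finite-horizon MDP with H+1 decision steps, a deterministic expert policy π*, and a policy π such that for every t ∈ {0,…,H} the per-step mistake probability under the expert's state distribution satisfies E_{s ∼ d_t^{π*}}[1 − π(π*(s)|s)] ≤ ε, yet the expected number of mistakes of π under its own trajectory distribution satisfies ℓ(π) ≥ ε·(1−ε)^H·(H+1)(H+2)/2. Hence the quadratic-in-horizon dependence of the behavioral cloning error bound cannot be improved in general (lower-bound / 'best possible' part of Theorem 1). -/

import Mathlib

open Finset

/-- Probability of a trajectory `τ = (s_0, a_0, …, s_H, a_H)` in a finite-horizon MDP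
with `H + 1` decision steps, initial distribution `d0`, transition kernel `T` and
policy `π`. -/
noncomputable def trajP {S A : Type} [Fintype S] [Fintype A] (H : ℕ)
    (d0 : S → ℝ) (T : S → A → S → ℝ) (π : S → A → ℝ)
    (τ : (Fin (H + 1) → S) × (Fin (H + 1) → A)) : ℝ :=
  d0 (τ.1 0) * (∏ t : Fin (H + 1), π (τ.1 t) (τ.2 t)) *
    ∏ t : Fin H, T (τ.1 t.castSucc) (τ.2 t.castSucc) (τ.1 t.succ)

/-- Time-indexed state distribution `d_t^π(s)`: probability that `s_t = s` under the
trajectory distribution `p_π`. -/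
noncomputable def stateDistAt {S A : Type} [Fintype S] [Fintype A] [DecidableEq S] (H : ℕ)
    (d0 : S → ℝ) (T : S → A → S → ℝ) (π : S → A → ℝ) (t : Fin (H + 1)) (s : S) : ℝ :=
  ∑ τ : (Fin (H + 1) → S) × (Fin (H + 1) → A),
    if τ.1 t = s then trajP H d0 T π τ else 0

/-- A deterministic policy viewed as a stochastic policy. -/
noncomputable def detPolicy {S A : Type} [DecidableEq A] (πstar : S → A) : S → A → ℝ :=
  fun _s a => if a = πstar _s then 1 else 0

/-- Expected number of mistakes `ℓ(π) = E_{τ ∼ p_π}[Σ_{t=0}^H 𝟙(a_t ≠ π*(s_t))]`. -/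
noncomputable def mistakes {S A : Type} [Fintype S] [Fintype A] [DecidableEq A] (H : ℕ)
    (d0 : S → ℝ) (T : S → A → S → ℝ) (π : S → A → ℝ) (πstar : S → A) : ℝ :=
  ∑ τ : (Fin (H + 1) → S) × (Fin (H + 1) → A),
    trajP H d0 T π τ *
      ((univ.filter fun t : Fin (H + 1) => τ.2 t ≠ πstar (τ.1 t)).card : ℝ)

namespace BCLB

noncomputable def D0 : Fin 2 → ℝ := fun s => if s = 0 then 1 else 0

def nxt : Fin 2 → Fin 2 → Fin 2 := fun s a => if s = 0 ∧ a = 0 then 0 else 1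

noncomputable def Tk : Fin 2 → Fin 2 → Fin 2 → ℝ := fun s a s' => if s' = nxt s a then 1 else 0

def pstar : Fin 2 → Fin 2 := fun _ => 0

noncomputable def pol (ε : ℝ) : Fin 2 → Fin 2 → ℝ := fun s a =>
  if s = 0 then (if a = 0 then 1 - ε else ε) else (if a = 0 then 0 else 1)

lemma trajP_det (H : ℕ) (τ : (Fin (H + 1) → Fin 2) × (Fin (H + 1) → Fin 2)) :
    trajP H D0 Tk (detPolicy pstar) τ
      = if τ = ((fun _ => 0), (fun _ => 0)) then 1 else 0 := by
  split_ifs with h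
  · subst h
    simp [trajP, D0, Tk, nxt, pstar, detPolicy]
  · by_contra hP
    apply h
    unfold trajP at hP
    have h1 := mul_ne_zero_iff.mp hP
    have h2 := mul_ne_zero_iff.mp h1.1
    have hs0 : τ.1 0 = 0 := by
      by_contra hs; exact h2.1 (if_neg hs)
    have hact : ∀ t : Fin (H + 1), τ.2 t = 0 := by
      intro t
      have ht := Finset.prod_ne_zero_iff.mp h2.2 t (Finset.mem_univ t)
      by_contra ha
      exact ht (by simp [detPolicy, pstar, ha])
    have hst : ∀ t : Fin H, τ.1 t.castSucc = 0 → τ.1 t.succ = 0 := by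
      intro t h0
      have ht := Finset.prod_ne_zero_iff.mp h1.2 t (Finset.mem_univ t)
      rw [hact, h0] at ht
      by_contra hs
      exact ht (by simp [Tk, nxt, hs])
    have hall : ∀ i : Fin (H + 1), τ.1 i = 0 := by
      intro i
      induction i using Fin.induction with
      | zero => exact hs0
      | succ j ih => exact hst j ih
    exact Prod.ext (funext hall) (funext hact)

lemma stateDist_det (H : ℕ) (t : Fin (H + 1)) (s : Fin 2) :
    stateDistAt H D0 Tk (detPolicy pstar) t s = if s = 0 then 1 else 0 := by
  unfold stateDistAt
  rw [Finset.sum_eq_single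
    (((fun _ => 0), (fun _ => 0)) : (Fin (H + 1) → Fin 2) × (Fin (H + 1) → Fin 2))]
  · simp [trajP_det, eq_comm]
  · intro τ _ hτ
    rw [trajP_det, if_neg hτ]
    simp
  · simp

def gtraj (H : ℕ) (k : Fin (H + 1)) : (Fin (H + 1) → Fin 2) × (Fin (H + 1) → Fin 2) :=
  (fun t => if (t : ℕ) ≤ (k : ℕ) then 0 else 1, fun t => if (t : ℕ) < (k : ℕ) then 0 else 1)

lemma gtraj_inj (H : ℕ) : Function.Injective (gtraj H) := by
  intro k k' h
  have hk := congrFun (congrArg Prod.snd h) k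
  have hk' := congrFun (congrArg Prod.snd h) k'
  simp only [gtraj] at hk hk'
  apply Fin.ext
  by_contra hne
  rcases Nat.lt_or_ge (k : ℕ) (k' : ℕ) with hlt | hge
  · rw [if_neg (lt_irrefl _), if_pos hlt] at hk
    exact one_ne_zero hk
  rcases Nat.lt_or_ge (k' : ℕ) (k : ℕ) with hlt' | hge'
  · rw [if_pos hlt', if_neg (lt_irrefl _)] at hk'
    exact zero_ne_one hk'
  · exact hne (Nat.le_antisymm hge' hge)

lemma trajP_gtraj_ge (H : ℕ) (ε : ℝ) (hε0 : 0 < ε) (hε1 : ε < 1) (k : Fin (H + 1)) :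
    ε * (1 - ε) ^ H ≤ trajP H D0 Tk (pol ε) (gtraj H k) := by
  have hd : D0 ((gtraj H k).1 0) = 1 := by simp [gtraj, D0]
  have hT : ∏ t : Fin H,
      Tk ((gtraj H k).1 t.castSucc) ((gtraj H k).2 t.castSucc) ((gtraj H k).1 t.succ) = 1 := by
    apply Finset.prod_eq_one
    intro t _
    simp only [gtraj, Fin.coe_castSucc, Fin.val_succ]
    split_ifs with h1 h2 h3 <;> first | (exfalso; omega) | (simp [Tk, nxt])
  have hk : pol ε ((gtraj H k).1 k) ((gtraj H k).2 k) = ε := by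
    simp [gtraj, pol]
  have hprod : ε * (1 - ε) ^ H ≤ ∏ t : Fin (H + 1), pol ε ((gtraj H k).1 t) ((gtraj H k).2 t) := by
    rw [← Finset.mul_prod_erase univ _ (Finset.mem_univ k), hk]
    apply mul_le_mul_of_nonneg_left ?_ (le_of_lt hε0)
    calc (1 - ε) ^ H = ∏ _t ∈ univ.erase k, (1 - ε) := by
          rw [Finset.prod_const, Finset.card_erase_of_mem (mem_univ k), Finset.card_univ,
            Fintype.card_fin]
          congr 1
      _ ≤ _ := by
          apply Finset.prod_le_prod (fun _ _ => by linarith)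
          intro t ht
          have htk : t ≠ k := (Finset.mem_erase.mp ht).1
          rcases Nat.lt_trichotomy (t : ℕ) (k : ℕ) with h | h | h
          · have e1 : (gtraj H k).1 t = 0 := if_pos (Nat.le_of_lt h)
            have e2 : (gtraj H k).2 t = 0 := if_pos h
            rw [e1, e2]
            simp [pol]
          · exact absurd (Fin.ext h) htk
          · have e1 : (gtraj H k).1 t = 1 := if_neg (by omega)
            have e2 : (gtraj H k).2 t = 1 := if_neg (by omega)
            rw [e1, e2]
            simp [pol]
            linarith
  unfold trajP
  rw [hd, hT, one_mul, mul_one]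
  exact hprod

lemma count_gtraj (H : ℕ) (k : Fin (H + 1)) :
    (univ.filter fun t : Fin (H + 1) => (gtraj H k).2 t ≠ pstar ((gtraj H k).1 t)).card
      = H + 1 - (k : ℕ) := by
  have heq : (univ.filter fun t : Fin (H + 1) => (gtraj H k).2 t ≠ pstar ((gtraj H k).1 t))
      = Finset.Ici k := by
    ext t
    simp only [mem_filter, mem_univ, true_and, Finset.mem_Ici]
    simp only [gtraj, pstar, ne_eq]
    rcases Nat.lt_or_ge (t : ℕ) (k : ℕ) with h | h
    · rw [if_pos h]
      simp only [not_true_eq_false, false_iff, not_not]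
      rw [Fin.le_def]
      · simp
        omega
    · rw [if_neg (Nat.not_lt.mpr h)]
      simp only [Fin.le_def]
      constructor
      · intro _; exact h
      · intro _ hc; exact one_ne_zero hc
  rw [heq, Fin.card_Ici]

lemma trajP_nonneg (H : ℕ) (ε : ℝ) (hε0 : 0 < ε) (hε1 : ε < 1)
    (τ : (Fin (H + 1) → Fin 2) × (Fin (H + 1) → Fin 2)) :
    0 ≤ trajP H D0 Tk (pol ε) τ := by
  unfold trajP
  apply mul_nonneg (mul_nonneg ?_ ?_) ?_
  · unfold D0; split <;> norm_num
  · apply Finset.prod_nonneg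
    intro t _
    unfold pol; split_ifs <;> linarith
  · apply Finset.prod_nonneg
    intro t _
    unfold Tk; split <;> norm_num

end BCLB


open BCLB in
/-- **Lower-bound ("best possible") part of Theorem 1.**
For every horizon `H ≥ 1` and `ε ∈ (0,1)` there is a finite-horizon MDP, a deterministic
expert `π*` and a policy `π` whose per-step mistake probability under the expert's state
distribution is at most `ε` at every time step, and yet
`ℓ(π) ≥ ε·(1−ε)^H·(H+1)(H+2)/2`: the quadratic dependence on the horizon of the
behavioral cloning bound cannot be improved in general. -/
theorem behavioral_cloning_error_lower_bound
    (H : ℕ) (hH : 1 ≤ H) (ε : ℝ) (hε0 : 0 < ε) (hε1 : ε < 1) :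
    ∃ (nS nA : ℕ) (d0 : Fin (nS + 1) → ℝ)
      (T : Fin (nS + 1) → Fin (nA + 1) → Fin (nS + 1) → ℝ)
      (πstar : Fin (nS + 1) → Fin (nA + 1))
      (π : Fin (nS + 1) → Fin (nA + 1) → ℝ),
      (∀ s, 0 ≤ d0 s) ∧ (∑ s, d0 s = 1) ∧
      (∀ s a s', 0 ≤ T s a s') ∧ (∀ s a, ∑ s', T s a s' = 1) ∧
      (∀ s a, 0 ≤ π s a) ∧ (∀ s, ∑ a, π s a = 1) ∧
      (∀ t : Fin (H + 1),
        ∑ s, stateDistAt H d0 T (detPolicy πstar) t s * (1 - π s (πstar s)) ≤ ε) ∧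
      ε * (1 - ε) ^ H * ((H : ℝ) + 1) * ((H : ℝ) + 2) / 2 ≤ mistakes H d0 T π πstar := by
  refine ⟨1, 1, D0, Tk, pstar, pol ε, ?_, ?_, ?_, ?_, ?_, ?_, ?_, ?_⟩
  · intro s; unfold D0; split <;> norm_num
  · simp [D0, Fin.sum_univ_two]
  · intro s a s'; unfold Tk; split <;> norm_num
  · intro s a
    fin_cases s <;> fin_cases a <;> simp [Tk, nxt, Fin.sum_univ_two]
  · intro s a; unfold pol; split_ifs <;> linarith
  · intro s
    fin_cases s <;> simp [pol, Fin.sum_univ_two]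
  · intro t
    rw [Fin.sum_univ_two]
    simp [stateDist_det, pol, pstar]
  · -- the mistakes lower bound
    have key : ∑ k : Fin (H + 1),
        trajP H D0 Tk (pol ε) (gtraj H k) *
          (((univ.filter fun t : Fin (H + 1) =>
              (gtraj H k).2 t ≠ pstar ((gtraj H k).1 t)).card : ℕ) : ℝ)
        ≤ mistakes H D0 Tk (pol ε) pstar := by
      unfold mistakes
      have himg : ∑ τ ∈ Finset.image (gtraj H) univ,
          (trajP H D0 Tk (pol ε) τ *
            (((univ.filter fun t : Fin (H + 1) => τ.2 t ≠ pstar (τ.1 t)).card : ℕ) : ℝ))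
          = ∑ k : Fin (H + 1),
          trajP H D0 Tk (pol ε) (gtraj H k) *
            (((univ.filter fun t : Fin (H + 1) =>
                (gtraj H k).2 t ≠ pstar ((gtraj H k).1 t)).card : ℕ) : ℝ) :=
        Finset.sum_image (fun x _ y _ h => gtraj_inj H h)
      rw [← himg]
      apply Finset.sum_le_sum_of_subset_of_nonneg (Finset.subset_univ _)
      intro τ _ _
      exact mul_nonneg (trajP_nonneg H ε hε0 hε1 τ) (Nat.cast_nonneg _)
    have hterm : ∀ k : Fin (H + 1),
        ε * (1 - ε) ^ H * ((H : ℝ) + 1 - (k : ℕ)) ≤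
          trajP H D0 Tk (pol ε) (gtraj H k) *
            (((univ.filter fun t : Fin (H + 1) =>
                (gtraj H k).2 t ≠ pstar ((gtraj H k).1 t)).card : ℕ) : ℝ) := by
      intro k
      rw [count_gtraj]
      have hcast : ((H + 1 - (k : ℕ) : ℕ) : ℝ) = (H : ℝ) + 1 - (k : ℕ) := by
        have := k.isLt
        push_cast [Nat.cast_sub (by omega : (k : ℕ) ≤ H + 1)]
        ring
      rw [hcast]
      apply mul_le_mul_of_nonneg_right (trajP_gtraj_ge H ε hε0 hε1 k)
      have := k.isLt
      have : ((k : ℕ) : ℝ) ≤ (H : ℝ) := by exact_mod_cast Nat.lt_succ_iff.mp this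
      linarith
    have hsum : ∑ k : Fin (H + 1), ((H : ℝ) + 1 - (k : ℕ))
        = ((H : ℝ) + 1) * ((H : ℝ) + 2) / 2 := by
      rw [Finset.sum_sub_distrib, Finset.sum_const, Finset.card_univ, Fintype.card_fin]
      have h2 : ∑ k : Fin (H + 1), (((k : ℕ) : ℝ)) = ((H : ℝ) + 1) * (H : ℝ) / 2 := by
        rw [Fin.sum_univ_eq_sum_range (fun i => (i : ℝ))]
        have hg := Finset.sum_range_id_mul_two (H + 1)
        have hg' : ((∑ i ∈ Finset.range (H + 1), i : ℕ) : ℝ) * 2 = ((H + 1) * H : ℕ) := by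
          exact_mod_cast congrArg (Nat.cast : ℕ → ℝ) hg
        push_cast at hg'
        push_cast
        linarith
      rw [h2]
      push_cast
      ring
    calc ε * (1 - ε) ^ H * ((H : ℝ) + 1) * ((H : ℝ) + 2) / 2
        = ∑ k : Fin (H + 1), ε * (1 - ε) ^ H * ((H : ℝ) + 1 - (k : ℕ)) := by
          rw [← Finset.mul_sum, hsum]; ring
      _ ≤ ∑ k : Fin (H + 1),
            trajP H D0 Tk (pol ε) (gtraj H k) *
              (((univ.filter fun t : Fin (H + 1) =>
                  (gtraj H k).2 t ≠ pstar ((gtraj H k).1 t)).card : ℕ) : ℝ) :=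
          Finset.sum_le_sum fun k _ => hterm k
      _ ≤ _ := key
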